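/- Let a be a random vector in ℂ^B with independent components a_1,...,a_B. If each |a_i|² satisfies Pr{|a_i|² < ε} ≐ ε^d, then the squared Euclidean norm satisfies Pr{‖a‖² < ε} ≐ ε^{Bd}. -/

import Mathlib

open MeasureTheory ProbabilityTheory Filter Set

/-- `f(ε) ≐ ε^d` : `lim_{ε→0⁺} log f(ε) / log ε = d`. -/
def DotEq (f : ℝ → ℝ) (d : ℝ) : Prop :=
  Tendsto (fun ε => Real.log (f ε) / Real.log ε) (nhdsWithin 0 (Set.Ioi 0)) (nhds d)

theorem norm_sq_dot_exponent_of_indep_components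
    {Ω : Type*} [MeasureSpace Ω] [IsProbabilityMeasure (ℙ : Measure Ω)]
    (B : ℕ) [NeZero B] (a : Ω → EuclideanSpace ℂ (Fin B)) (d : ℝ)
    (hmeas : ∀ i, Measurable fun ω => a ω i)
    (hindep : iIndepFun (fun i ω => a ω i) ℙ)
    (hdot : ∀ i, DotEq (fun ε => (ℙ {ω | ‖a ω i‖ ^ 2 < ε}).toReal) d) :
    DotEq (fun ε => (ℙ {ω | ‖a ω‖ ^ 2 < ε}).toReal) (B * d) := by
  classical
  have hB : (B : ℝ) ≠ 0 := Nat.cast_ne_zero.mpr (NeZero.ne B)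
  have hBpos : (0 : ℝ) < B := by
    have := Nat.pos_of_ne_zero (NeZero.ne B); exact_mod_cast this
  have hnorm : ∀ ω : Ω, ‖a ω‖ ^ 2 = ∑ i, ‖a ω i‖ ^ 2 := by
    intro ω
    rw [EuclideanSpace.norm_eq, Real.sq_sqrt (by positivity)]
  have hcoord : ∀ (ω : Ω) (i : Fin B), ‖a ω i‖ ^ 2 ≤ ‖a ω‖ ^ 2 := by
    intro ω i
    rw [hnorm ω]
    exact Finset.single_le_sum (f := fun j => ‖a ω j‖ ^ 2)
      (fun j _ => by positivity) (Finset.mem_univ i)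
  by_cases hdeg : ∃ i, ∃ δ > 0, ℙ {ω | ‖a ω i‖ ^ 2 < δ} = 0
  · -- degenerate case : some component has zero probability near 0
    obtain ⟨i, δ, hδ, h0⟩ := hdeg
    have hsub : ∀ ε ≤ δ, ℙ {ω | ‖a ω i‖ ^ 2 < ε} = 0 := fun ε hε =>
      measure_mono_null (fun ω h => lt_of_lt_of_le h hε) h0
    have hmem : Ioo (0:ℝ) δ ∈ nhdsWithin (0:ℝ) (Set.Ioi 0) :=
      Ioo_mem_nhdsGT_of_mem (by constructor <;> simp [hδ])
    have hd0 : d = 0 := by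
      refine tendsto_nhds_unique (hdot i) (Tendsto.congr' ?_ tendsto_const_nhds)
      filter_upwards [hmem] with ε hε
      rw [hsub ε hε.2.le]; simp
    rw [hd0, mul_zero]
    refine Tendsto.congr' ?_ tendsto_const_nhds
    filter_upwards [hmem] with ε hε
    have : ℙ {ω | ‖a ω‖ ^ 2 < ε} = 0 := by
      refine measure_mono_null (fun ω h => ?_) (hsub ε hε.2.le)
      exact lt_of_le_of_lt (hcoord ω i) h
    rw [this]; simp
  · push_neg at hdeg
    have hPpos : ∀ (i : Fin B) {δ : ℝ}, 0 < δ →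
        0 < (ℙ {ω | ‖a ω i‖ ^ 2 < δ}).toReal := fun i δ hδ =>
      ENNReal.toReal_pos (hdeg i δ hδ) (measure_ne_top _ _)
    set P : Fin B → ℝ → ℝ := fun i ε => (ℙ {ω | ‖a ω i‖ ^ 2 < ε}).toReal with hP
    set G : ℝ → ℝ := fun δ => (ℙ (⋂ i, {ω | ‖a ω i‖ ^ 2 < δ})).toReal with hG
    have hGprod : ∀ δ : ℝ, G δ = ∏ i, P i δ := by
      intro δ
      have key := hindep.meas_iInter (s := fun i => {ω | ‖a ω i‖ ^ 2 < δ})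
        (fun i => ⟨{z : ℂ | ‖z‖ ^ 2 < δ},
          (measurable_norm.pow_const 2) measurableSet_Iio, rfl⟩)
      show (ℙ (⋂ i, {ω | ‖a ω i‖ ^ 2 < δ})).toReal = _
      rw [key, ENNReal.toReal_prod]
    have hGpos : ∀ {δ : ℝ}, 0 < δ → 0 < G δ := by
      intro δ hδ
      rw [hGprod]
      exact Finset.prod_pos fun i _ => hPpos i hδ
    -- limit of log G ε / log ε
    have hglim : Tendsto (fun ε => Real.log (G ε) / Real.log ε)
        (nhdsWithin 0 (Set.Ioi 0)) (nhds (B * d)) := by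
      have hsum : Tendsto (fun ε => ∑ i : Fin B, Real.log (P i ε) / Real.log ε)
          (nhdsWithin 0 (Set.Ioi 0)) (nhds (∑ _i : Fin B, d)) :=
        tendsto_finset_sum _ fun i _ => hdot i
      rw [Finset.sum_const, Finset.card_univ, Fintype.card_fin, nsmul_eq_mul] at hsum
      refine Tendsto.congr' ?_ hsum
      filter_upwards [self_mem_nhdsWithin] with ε (hε : (0:ℝ) < ε)
      rw [hGprod, Real.log_prod (fun i _ => (hPpos i hε).ne'), Finset.sum_div]
    -- limit of log G (ε / B) / log ε
    have hcomp : Tendsto (fun ε : ℝ => ε / B) (nhdsWithin 0 (Set.Ioi 0))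
        (nhdsWithin 0 (Set.Ioi 0)) := by
      rw [tendsto_nhdsWithin_iff]
      constructor
      · have h0 : Tendsto (fun ε : ℝ => ε / B) (nhds 0) (nhds ((0:ℝ) / B)) :=
          tendsto_id.div_const _
        rw [zero_div] at h0
        exact h0.mono_left nhdsWithin_le_nhds
      · filter_upwards [self_mem_nhdsWithin] with ε (hε : (0:ℝ) < ε)
        exact div_pos hε hBpos
    have hhlim : Tendsto (fun ε => Real.log (G (ε / B)) / Real.log ε)
        (nhdsWithin 0 (Set.Ioi 0)) (nhds (B * d)) := by
      have h1 : Tendsto (fun ε => Real.log (G (ε / B)) / Real.log (ε / B))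
          (nhdsWithin 0 (Set.Ioi 0)) (nhds (B * d)) := hglim.comp hcomp
      have h2 : Tendsto (fun ε => Real.log (ε / B) / Real.log ε)
          (nhdsWithin 0 (Set.Ioi 0)) (nhds 1) := by
        have hlb : Tendsto Real.log (nhdsWithin (0:ℝ) (Set.Ioi 0)) atBot :=
          Real.tendsto_log_nhdsGT_zero
        have h3 : Tendsto (fun ε => Real.log B / Real.log ε)
            (nhdsWithin (0:ℝ) (Set.Ioi 0)) (nhds 0) := by
          have h4 := (tendsto_const_nhds (x := Real.log B)).div_atTop
            (tendsto_neg_atBot_atTop.comp hlb)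
          have h5 := h4.neg
          rw [neg_zero] at h5
          refine Tendsto.congr (fun ε => ?_) h5
          simp [Function.comp, div_neg]
        have : Tendsto (fun ε => 1 - Real.log B / Real.log ε)
            (nhdsWithin 0 (Set.Ioi 0)) (nhds (1 - 0)) :=
          tendsto_const_nhds.sub h3
        rw [sub_zero] at this
        refine Tendsto.congr' ?_ this
        filter_upwards [Ioo_mem_nhdsGT_of_mem (by constructor <;> norm_num :
          (0:ℝ) ∈ Ico 0 1)] with ε hε
        have hln : Real.log ε ≠ 0 := (Real.log_neg hε.1 hε.2).ne
        rw [Real.log_div hε.1.ne' hB, sub_div, div_self hln]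
      have := h1.mul h2
      rw [mul_one] at this
      refine Tendsto.congr' ?_ this
      filter_upwards [Ioo_mem_nhdsGT_of_mem
        (Set.mem_Ico.mpr ⟨le_refl (0:ℝ), lt_min one_pos hBpos⟩ :
          (0:ℝ) ∈ Ico (0:ℝ) (min 1 (B:ℝ)))] with ε hε
      have hε1 : ε < 1 := hε.2.trans_le (min_le_left _ _)
      have hεB : ε < B := hε.2.trans_le (min_le_right _ _)
      have hdivlt : ε / B < 1 := (div_lt_one hBpos).mpr hεB
      have hln : Real.log (ε / B) ≠ 0 :=
        (Real.log_neg (div_pos hε.1 hBpos) hdivlt).ne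
      field_simp
    -- squeeze
    have hbounds : ∀ᶠ ε in nhdsWithin (0:ℝ) (Set.Ioi 0),
        Real.log (G ε) / Real.log ε ≤
          Real.log ((ℙ {ω | ‖a ω‖ ^ 2 < ε}).toReal) / Real.log ε ∧
        Real.log ((ℙ {ω | ‖a ω‖ ^ 2 < ε}).toReal) / Real.log ε ≤
          Real.log (G (ε / B)) / Real.log ε := by
      filter_upwards [Ioo_mem_nhdsGT_of_mem (by constructor <;> norm_num :
        (0:ℝ) ∈ Ico 0 1)] with ε hε
      have hεpos := hε.1
      have hlogneg : Real.log ε ≤ 0 := (Real.log_neg hεpos hε.2).le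
      set F : ℝ := (ℙ {ω | ‖a ω‖ ^ 2 < ε}).toReal with hF
      have hFG : F ≤ G ε := by
        refine ENNReal.toReal_mono (measure_ne_top _ _) (measure_mono ?_)
        intro ω hω
        exact Set.mem_iInter.mpr fun i => lt_of_le_of_lt (hcoord ω i) hω
      have hGF : G (ε / B) ≤ F := by
        refine ENNReal.toReal_mono (measure_ne_top _ _) (measure_mono ?_)
        intro ω hω
        have h1 : ∀ i : Fin B, ‖a ω i‖ ^ 2 < ε / B := fun i =>
          Set.mem_iInter.mp hω i
        have : (‖a ω‖ : ℝ) ^ 2 < ∑ _i : Fin B, ε / B := by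
          rw [hnorm ω]
          exact Finset.sum_lt_sum_of_nonempty Finset.univ_nonempty fun i _ => h1 i
        rwa [Finset.sum_const, Finset.card_univ, Fintype.card_fin, nsmul_eq_mul,
          mul_div_cancel₀ _ hB] at this
      have hFpos : 0 < F := lt_of_lt_of_le (hGpos (div_pos hεpos hBpos)) hGF
      constructor
      · exact div_le_div_of_nonpos_of_le hlogneg (Real.log_le_log hFpos hFG)
      · exact div_le_div_of_nonpos_of_le hlogneg
          (Real.log_le_log (hGpos (div_pos hεpos hBpos)) hGF)
    exact tendsto_of_tendsto_of_tendsto_of_le_of_le' hglim hhlim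
      (hbounds.mono fun ε h => h.1) (hbounds.mono fun ε h => h.2)
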